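/- ◊*_λ implies ◊_λ for every regular uncountable cardinal λ: if there is a sequence ⟨D_α : α < λ⟩ with D_α ⊆ P(α), |D_α| ≤ |α|, guessing every X ⊆ λ on a club, then there is a sequence ⟨A_α : α < λ⟩ with A_α ⊆ α such that for every X ⊆ λ, {α : X ∩ α = A_α} is stationary. -/

import Mathlib

open Cardinal

/-- `C` is a closed unbounded subset of the ordinal `l`. -/
def IsClubIn (l : Ordinal) (C : Set Ordinal) : Prop :=
  (∀ x ∈ C, x < l) ∧ (∀ a < l, ∃ b ∈ C, a ≤ b) ∧
  (∀ a < l, a ≠ 0 → (∀ b < a, ∃ c ∈ C, b < c ∧ c < a) → a ∈ C)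

/-- `S` is stationary in `l`: it meets every club subset of `l`. -/
def IsStationaryIn (l : Ordinal) (S : Set Ordinal) : Prop :=
  ∀ C, IsClubIn l C → (S ∩ C).Nonempty

/-- `X ∩ α`, the restriction of a set of ordinals to those below `α`. -/
def restr (X : Set Ordinal) (α : Ordinal) : Set Ordinal := {x ∈ X | x < α}

/-- `D` is a `◊*_l`-sequence. -/
def IsDiamondStarSeq (l : Ordinal) (D : Ordinal → Set (Set Ordinal)) : Prop :=
  (∀ α < l, ∀ s ∈ D α, ∀ x ∈ s, x < α) ∧
  (∀ α < l, #(D α) ≤ Cardinal.lift.{1,0} α.card) ∧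
  (∀ X : Set Ordinal, (∀ x ∈ X, x < l) →
    ∃ C, IsClubIn l C ∧ ∀ α ∈ C, restr X α ∈ D α)

section Aux

open Ordinal

/-- A pairing function on ordinals below `lam.ord`. -/
lemma exists_pairing (lam : Cardinal.{0}) (hunc : ℵ₀ < lam) :
    ∃ p : Ordinal → Ordinal → Ordinal,
      (∀ ξ < lam.ord, ∀ η < lam.ord, p ξ η < lam.ord) ∧
      (∀ ξ η ξ' η', ξ < lam.ord → η < lam.ord → ξ' < lam.ord → η' < lam.ord →
        p ξ η = p ξ' η' → ξ = ξ' ∧ η = η') := by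
  have h1 : #(↥(Set.Iio lam.ord) × ↥(Set.Iio lam.ord)) = #(↥(Set.Iio lam.ord)) := by
    rw [Cardinal.mk_prod, Ordinal.mk_Iio_ordinal, Cardinal.card_ord, Cardinal.lift_id,
      Cardinal.mul_eq_self (by rw [Cardinal.aleph0_le_lift]; exact hunc.le)]
  obtain ⟨f⟩ := Cardinal.eq.mp h1
  classical
  refine ⟨fun ξ η => if h : ξ < lam.ord ∧ η < lam.ord then
      (f ⟨⟨ξ, h.1⟩, ⟨η, h.2⟩⟩ : ↥(Set.Iio lam.ord)).1 else 0, ?_, ?_⟩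
  · intro ξ hξ η hη
    dsimp only
    rw [dif_pos (⟨hξ, hη⟩ : ξ < lam.ord ∧ η < lam.ord)]
    exact (f _).2
  · intro ξ η ξ' η' hξ hη hξ' hη' heq
    dsimp only at heq
    rw [dif_pos (⟨hξ, hη⟩ : ξ < lam.ord ∧ η < lam.ord),
      dif_pos (⟨hξ', hη'⟩ : ξ' < lam.ord ∧ η' < lam.ord)] at heq
    have := f.injective (Subtype.ext heq)
    have h1 := congrArg (fun q => (q.1 : Ordinal)) this
    have h2 := congrArg (fun q => (q.2 : Ordinal)) this
    exact ⟨h1, h2⟩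

/-- An enumeration of each `D α` by the ordinals below `α`. -/
lemma exists_enum (lam : Cardinal.{0}) (D : Ordinal → Set (Set Ordinal))
    (hcard : ∀ α < lam.ord, #(D α) ≤ Cardinal.lift.{1,0} α.card) :
    ∃ E : Ordinal → Ordinal → Set Ordinal,
      ∀ α < lam.ord, ∀ S ∈ D α, ∃ ξ < α, E α ξ = S := by
  classical
  have key : ∀ α : Ordinal, ∃ Eα : Ordinal → Set Ordinal,
      α < lam.ord → ∀ S ∈ D α, ∃ ξ < α, Eα ξ = S := by
    intro α
    by_cases hα : α < lam.ord
    · have hle : #(↥(D α)) ≤ #(↥(Set.Iio α)) := by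
        rw [Ordinal.mk_Iio_ordinal]; exact hcard α hα
      obtain ⟨j⟩ := (Cardinal.le_def _ _).mp hle
      refine ⟨fun ξ => if h : ∃ S : ↥(D α), (j S : Ordinal) = ξ then (h.choose : Set Ordinal)
        else ∅, ?_⟩
      intro _ S hS
      refine ⟨(j ⟨S, hS⟩ : Ordinal), (j ⟨S, hS⟩).2, ?_⟩
      have hex : ∃ S' : ↥(D α), (j S' : Ordinal) = (j ⟨S, hS⟩ : Ordinal) := ⟨⟨S, hS⟩, rfl⟩
      dsimp only
      rw [dif_pos hex]
      have h1 : hex.choose = ⟨S, hS⟩ := j.injective (Subtype.ext hex.choose_spec)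
      rw [h1]
    · exact ⟨fun _ => ∅, fun h => absurd h hα⟩
  choose E hE using key
  exact ⟨E, fun α hα => hE α hα⟩

/-- There is a point below `lam.ord` belonging to a given club, to the diagonal
intersection of a family of clubs, and closed under a given binary function. -/
lemma exists_good (lam : Cardinal.{0}) (hreg : lam.IsRegular) (hunc : ℵ₀ < lam)
    (C0 : Set Ordinal) (hC0 : IsClubIn lam.ord C0)
    (Cs : Ordinal → Set Ordinal) (hCs : ∀ ζ, IsClubIn lam.ord (Cs ζ))
    (p : Ordinal → Ordinal → Ordinal)
    (hp : ∀ ξ < lam.ord, ∀ η < lam.ord, p ξ η < lam.ord) :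
    ∃ α, α ∈ C0 ∧ α < lam.ord ∧ 0 < α ∧ (∀ ζ < α, α ∈ Cs ζ) ∧
      ∀ ξ < α, ∀ η < α, p ξ η < α := by
  have hlim : Order.IsSuccLimit lam.ord := Cardinal.isSuccLimit_ord hunc.le
  have hsucc : ∀ b < lam.ord, b + 1 < lam.ord := by
    intro b hb
    rw [Ordinal.add_one_eq_succ]
    exact hlim.succ_lt hb
  have hself : ∀ b : Ordinal, b < b + 1 := by
    intro b; rw [Ordinal.add_one_eq_succ]; exact Order.lt_succ b
  have he : ∀ b, b < lam.ord → ∃ c, c ∈ C0 ∧ b < c ∧ c < lam.ord := by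
    intro b hb
    obtain ⟨c, hcC, hbc⟩ := hC0.2.1 (b + 1) (hsucc b hb)
    exact ⟨c, hcC, lt_of_lt_of_le (hself b) hbc, hC0.1 c hcC⟩
  choose e heC heb helt using he
  have hd : ∀ (ζ : Ordinal) (b), b < lam.ord → ∃ c, c ∈ Cs ζ ∧ b < c ∧ c < lam.ord := by
    intro ζ b hb
    obtain ⟨c, hcC, hbc⟩ := (hCs ζ).2.1 (b + 1) (hsucc b hb)
    exact ⟨c, hcC, lt_of_lt_of_le (hself b) hbc, (hCs ζ).1 c hcC⟩
  choose d hdC hdb hdlt using hd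
  set g : Ordinal → Ordinal := fun b =>
    if hb : b < lam.ord then
      max (e b hb + 1)
        (max (Ordinal.bsup b (fun ζ _ => d ζ b hb + 1))
          (Ordinal.bsup b (fun ξ _ => Ordinal.bsup b (fun η _ => p ξ η + 1))))
    else 0 with hgdef
  have hg_eq : ∀ b (hb : b < lam.ord), g b =
      max (e b hb + 1)
        (max (Ordinal.bsup b (fun ζ _ => d ζ b hb + 1))
          (Ordinal.bsup b (fun ξ _ => Ordinal.bsup b (fun η _ => p ξ η + 1)))) := by
    intro b hb; rw [hgdef]; exact dif_pos hb
  have hcardb : ∀ b, b < lam.ord → b.card < lam := fun b hb => Cardinal.lt_ord.mp hb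
  have hglt : ∀ b, b < lam.ord → g b < lam.ord := by
    intro b hb
    rw [hg_eq b hb]
    refine max_lt (hsucc _ (helt b hb)) (max_lt ?_ ?_)
    · exact Cardinal.bsup_lt_ord_of_isRegular hreg (hcardb b hb)
        (fun ζ hζ => hsucc _ (hdlt ζ b hb))
    · refine Cardinal.bsup_lt_ord_of_isRegular hreg (hcardb b hb) (fun ξ hξ => ?_)
      exact Cardinal.bsup_lt_ord_of_isRegular hreg (hcardb b hb)
        (fun η hη => hsucc _ (hp ξ (hξ.trans hb) η (hη.trans hb)))
  have hgb : ∀ b (hb : b < lam.ord), b < g b := by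
    intro b hb
    rw [hg_eq b hb]
    exact lt_of_lt_of_le ((heb b hb).trans (hself _)) (le_max_left _ _)
  -- the ω-chain
  set a : ℕ → Ordinal := fun n => Nat.rec 1 (fun _ ih => g ih) n with hadef
  have ha0 : a 0 = 1 := rfl
  have haS : ∀ n, a (n + 1) = g (a n) := fun n => rfl
  have halt : ∀ n, a n < lam.ord := by
    intro n
    induction n with
    | zero => exact ha0 ▸ Ordinal.one_lt_of_isSuccLimit hlim
    | succ n ih => rw [haS]; exact hglt _ ih
  have hmono : ∀ n, a n < a (n + 1) := by
    intro n; rw [haS]; exact hgb _ (halt n)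
  have hsm : StrictMono a := strictMono_nat_of_lt_succ hmono
  set α : Ordinal := iSup a with hαdef
  have hαlt : α < lam.ord := by
    refine Cardinal.iSup_lt_ord_of_isRegular hreg ?_ halt
    rw [Cardinal.mk_nat]; exact hunc
  have hle_sup : ∀ n, a n ≤ α := fun n => Ordinal.le_iSup a n
  have hlt_sup : ∀ n, a n < α := fun n => lt_of_lt_of_le (hmono n) (hle_sup (n + 1))
  have hex_n : ∀ b, b < α → ∃ n, b < a n := fun b hb => Ordinal.lt_iSup_iff.mp hb
  have hαpos : 0 < α := lt_of_lt_of_le (ha0 ▸ zero_lt_one) (hle_sup 0)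
  have hαne : α ≠ 0 := ne_of_gt hαpos
  refine ⟨α, ?_, hαlt, hαpos, ?_, ?_⟩
  · -- α ∈ C0
    refine hC0.2.2 α hαlt hαne ?_
    intro b hb
    obtain ⟨n, hn⟩ := hex_n b hb
    refine ⟨e (a n) (halt n), heC _ _, hn.trans (heb _ _), ?_⟩
    have h1 : e (a n) (halt n) < g (a n) := by
      rw [hg_eq _ (halt n)]
      exact lt_of_lt_of_le (hself _) (le_max_left _ _)
    rw [← haS] at h1
    exact h1.trans (hlt_sup (n + 1))
  · -- diagonal intersection
    intro ζ hζ
    refine (hCs ζ).2.2 α hαlt hαne ?_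
    intro b hb
    obtain ⟨n1, hn1⟩ := hex_n b hb
    obtain ⟨n2, hn2⟩ := hex_n ζ hζ
    set n := max n1 n2 with hn
    have hbn : b < a n := hn1.trans_le (hsm.monotone (le_max_left n1 n2))
    have hζn : ζ < a n := hn2.trans_le (hsm.monotone (le_max_right n1 n2))
    refine ⟨d ζ (a n) (halt n), hdC _ _ _, hbn.trans (hdb _ _ _), ?_⟩
    have h1 : d ζ (a n) (halt n) < g (a n) := by
      rw [hg_eq _ (halt n)]
      refine lt_of_lt_of_le (hself _) (le_trans ?_ (le_max_right _ _))
      exact le_trans (Ordinal.le_bsup (fun ζ' _ => d ζ' (a n) (halt n) + 1) ζ hζn)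
        (le_max_left _ _)
    rw [← haS] at h1
    exact h1.trans (hlt_sup (n + 1))
  · -- closure under p
    intro ξ hξ η hη
    obtain ⟨n1, hn1⟩ := hex_n ξ hξ
    obtain ⟨n2, hn2⟩ := hex_n η hη
    set n := max n1 n2 with hn
    have hξn : ξ < a n := hn1.trans_le (hsm.monotone (le_max_left n1 n2))
    have hηn : η < a n := hn2.trans_le (hsm.monotone (le_max_right n1 n2))
    have h1 : p ξ η < g (a n) := by
      rw [hg_eq _ (halt n)]
      refine lt_of_lt_of_le (hself _) (le_trans ?_ (le_max_right _ _))
      refine le_trans ?_ (le_max_right _ _)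
      refine le_trans (Ordinal.le_bsup (fun η' _ => p ξ η' + 1) η hηn) ?_
      exact Ordinal.le_bsup (fun ξ' _ => Ordinal.bsup (a n) (fun η' _ => p ξ' η' + 1)) ξ hξn
    rw [← haS] at h1
    exact h1.trans (hlt_sup (n + 1))

end Aux

/-- `◊*_λ` implies `◊_λ` for every regular uncountable `λ`: from a
`◊*_λ`-sequence one obtains `⟨A_α : α < λ⟩` with `A_α ⊆ α` such that for every
`X ⊆ λ` the set `{α < λ : X ∩ α = A_α}` is stationary in `λ`. -/
theorem stmt11 (lam : Cardinal) (hreg : lam.IsRegular) (hunc : ℵ₀ < lam)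
    (D : Ordinal → Set (Set Ordinal)) (hD : IsDiamondStarSeq lam.ord D) :
    ∃ A : Ordinal → Set Ordinal,
      (∀ α < lam.ord, ∀ x ∈ A α, x < α) ∧
      ∀ X : Set Ordinal, (∀ x ∈ X, x < lam.ord) →
        IsStationaryIn lam.ord {α | α < lam.ord ∧ restr X α = A α} := by
  obtain ⟨p, hpb, hpi⟩ := exists_pairing lam hunc
  obtain ⟨E, hE⟩ := exists_enum lam D hD.2.1
  set B : Ordinal → Ordinal → Set Ordinal :=
    fun ζ α => {η | η < α ∧ p ζ η ∈ E α ζ} with hBdef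
  by_contra hcon
  push_neg at hcon
  have key : ∀ ζ : Ordinal, ∃ X Cc, (∀ x ∈ X, x < lam.ord) ∧ IsClubIn lam.ord Cc ∧
      ∀ α ∈ Cc, ¬(α < lam.ord ∧ restr X α = B ζ α) := by
    intro ζ
    obtain ⟨X, hXs, hnst⟩ := hcon (B ζ) (fun α _ x hx => hx.1)
    unfold IsStationaryIn at hnst
    push_neg at hnst
    obtain ⟨Cc, hCc, hempty⟩ := hnst
    refine ⟨X, Cc, hXs, hCc, fun α hαC hmem => ?_⟩
    rw [Set.eq_empty_iff_forall_notMem] at hempty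
    exact hempty α ⟨hmem, hαC⟩
  choose X Cc hXs hCc hdisj using key
  set Y : Set Ordinal := {β | ∃ ζ η, ζ < lam.ord ∧ η ∈ X ζ ∧ β = p ζ η} with hYdef
  have hYsub : ∀ x ∈ Y, x < lam.ord := by
    rintro x ⟨ζ, η, hζ, hη, rfl⟩
    exact hpb ζ hζ η (hXs ζ η hη)
  obtain ⟨C0, hC0, hC0g⟩ := hD.2.2 Y hYsub
  obtain ⟨α, hαC0, hαlt, hαpos, hαCs, hαp⟩ :=
    exists_good lam hreg hunc C0 hC0 Cc hCc p hpb
  have hYα : restr Y α ∈ D α := hC0g α hαC0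
  obtain ⟨ζ, hζα, hEeq⟩ := hE α hαlt _ hYα
  have hζlt : ζ < lam.ord := hζα.trans hαlt
  have hXeq : restr (X ζ) α = B ζ α := by
    ext η
    simp only [restr, hBdef, Set.mem_setOf_eq, hEeq]
    constructor
    · rintro ⟨hηX, hηα⟩
      exact ⟨hηα, ⟨ζ, η, hζlt, hηX, rfl⟩, hαp ζ hζα η hηα⟩
    · rintro ⟨hηα, ⟨ζ', η', hζ', hη', heq⟩, _⟩
      obtain ⟨h1, h2⟩ := hpi ζ' η' ζ η hζ' (hXs ζ' η' hη') hζlt (hηα.trans hαlt) heq.symm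
      exact ⟨h1 ▸ h2 ▸ hη', hηα⟩
  exact hdisj ζ α (hαCs ζ hζα) ⟨hαlt, hXeq⟩
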